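/- Let m ≥ 1, let ℓ be an integer with 1 ≤ ℓ ≤ m and gcd(ℓ, m) = 1, and let λ ∈ ℤ. Define a_j = λ + 1 for 0 ≤ j ≤ ℓ−1 and a_j = λ for ℓ ≤ j ≤ m−1. Then the ℤ_m integer group determinant with these coefficients, i.e. the determinant of the circulant matrix (a_{(i−j) mod m})_{0≤i,j<m}, equals ℓ + λm. -/

import Mathlib

/-- `D` is a `ℤ_m` integer group determinant: a determinant of an integer circulant
matrix `(a_{(i-j) mod m})`. -/
def IsCirculantDet (m : ℕ) (D : ℤ) : Prop :=
  ∃ a : Fin m → ℤ, (Matrix.circulant a).det = D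

private lemma pow_mod_aux {z : ℂ} {m : ℕ} (hz : z ^ m = 1) (n : ℕ) : z ^ n = z ^ (n % m) := by
  conv_lhs => rw [← Nat.div_add_mod n m]
  rw [pow_add, pow_mul, hz, one_pow, one_mul]

private lemma pow_congr_aux {z : ℂ} {m : ℕ} (hz : z ^ m = 1) {a b : ℕ} (hab : a % m = b % m) :
    z ^ a = z ^ b := by rw [pow_mod_aux hz a, pow_mod_aux hz b, hab]

/-- The circulant determinant with `ℓ` entries `λ + 1` followed by `m - ℓ` entries `λ`
equals `ℓ + λ m`, when `gcd(ℓ, m) = 1`. -/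
theorem stmt10 (m ℓ : ℕ) (hm : 1 ≤ m) (hℓ1 : 1 ≤ ℓ) (hℓm : ℓ ≤ m)
    (h : Nat.gcd ℓ m = 1) (lam : ℤ) (a : Fin m → ℤ)
    (ha : ∀ j : Fin m, a j = if (j : ℕ) < ℓ then lam + 1 else lam) :
    (Matrix.circulant a).det = (ℓ : ℤ) + lam * m := by
  by_cases hm1 : m = 1
  · subst hm1
    have hℓ' : ℓ = 1 := le_antisymm hℓm hℓ1
    subst hℓ'
    rw [Matrix.det_fin_one]
    rw [Matrix.circulant_apply]
    rw [ha]
    norm_num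
    ring
  -- now m ≥ 2
  have hm2 : 2 ≤ m := by omega
  have hℓlt : ℓ < m := by
    rcases lt_or_eq_of_le hℓm with h' | rfl
    · exact h'
    · rw [Nat.gcd_self] at h; omega
  haveI : NeZero m := ⟨by omega⟩
  have hm0 : m ≠ 0 := by omega
  set ζ : ℂ := Complex.exp (2 * Real.pi * Complex.I / m) with hζdef
  have hζ : IsPrimitiveRoot ζ m := Complex.isPrimitiveRoot_exp m hm0
  set ξ : ℂ := ζ⁻¹ with hξdef
  have hξ : IsPrimitiveRoot ξ m := hζ.inv
  have hζm : ζ ^ m = 1 := hζ.pow_eq_one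
  have hξm : ξ ^ m = 1 := hξ.pow_eq_one
  have hζ0 : ζ ≠ 0 := hζ.ne_zero hm0
  have hξne : ∀ k : Fin m, k ≠ 0 → ξ ^ (k : ℕ) ≠ 1 := by
    intro k hk h1
    have : (k : ℕ) = 0 := hξ.pow_inj k.isLt (by omega) (by simpa using h1)
    exact hk (Fin.ext this)
  set g : Fin m → ℂ := fun k => ∑ t : Fin m, (a t : ℂ) * ξ ^ ((t : ℕ) * (k : ℕ)) with hgdef
  set W : Matrix (Fin m) (Fin m) ℂ := Matrix.of fun i k => ζ ^ ((i : ℕ) * (k : ℕ)) with hWdef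
  -- conjugation identity
  have key : (Matrix.circulant a).map (Int.cast : ℤ → ℂ) * W = W * Matrix.diagonal g := by
    ext i k
    rw [Matrix.mul_diagonal]
    rw [Matrix.mul_apply]
    simp only [Matrix.map_apply, Matrix.circulant_apply, Matrix.of_apply, hWdef, hgdef]
    rw [← Equiv.sum_comp (Equiv.subLeft i)
      (fun j => ((a (i - j) : ℂ) * ζ ^ ((j : ℕ) * (k : ℕ))))]
    rw [Finset.mul_sum]
    refine Finset.sum_congr rfl fun t _ => ?_
    simp only [Equiv.subLeft_apply, sub_sub_cancel]
    have h2 : ζ ^ (((i - t : Fin m) : ℕ) * (k : ℕ)) * ζ ^ ((t : ℕ) * (k : ℕ))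
        = ζ ^ ((i : ℕ) * (k : ℕ)) := by
      rw [← pow_add, ← add_mul]
      refine pow_congr_aux hζm ?_
      have h3 : (((i - t : Fin m) : ℕ) + (t : ℕ)) % m = (i : ℕ) % m := by
        rw [← Fin.val_add, sub_add_cancel, Nat.mod_eq_of_lt i.isLt]
      exact Nat.ModEq.mul_right _ h3
    have hxi : ξ ^ ((t : ℕ) * (k : ℕ)) = (ζ ^ ((t : ℕ) * (k : ℕ)))⁻¹ := by
      rw [hξdef, inv_pow]
    rw [hxi, ← h2]
    field_simp
  -- determinant of W is nonzero
  have hWdet : W.det ≠ 0 := by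
    have hWv : W = Matrix.vandermonde (fun i : Fin m => ζ ^ (i : ℕ)) := by
      ext i j
      simp [hWdef, Matrix.vandermonde, pow_mul]
    rw [hWv, Matrix.det_vandermonde_ne_zero_iff]
    intro i j hij
    exact Fin.ext (hζ.pow_inj i.isLt j.isLt hij)
  -- determinant identity
  have hdet : ((Matrix.circulant a).det : ℂ) = ∏ k : Fin m, g k := by
    have h1 := congrArg Matrix.det key
    rw [Matrix.det_mul, Matrix.det_mul, Matrix.det_diagonal, mul_comm W.det] at h1
    have h2 := mul_right_cancel₀ hWdet h1
    rw [← h2,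
      show (Matrix.circulant a).map (Int.cast : ℤ → ℂ)
        = (Int.castRingHom ℂ).mapMatrix (Matrix.circulant a) from rfl,
      ← RingHom.map_det]
    rfl
  -- sum of coefficients
  have hsum : ∑ t : Fin m, a t = (ℓ : ℤ) + lam * m := by
    simp_rw [ha]
    rw [Fin.sum_univ_eq_sum_range (fun i => if i < ℓ then lam + 1 else lam) m]
    rw [Finset.range_eq_Ico, ← Finset.sum_Ico_consecutive _ (Nat.zero_le ℓ) hℓm]
    rw [Finset.sum_congr rfl (fun i hi => if_pos (Finset.mem_Ico.mp hi).2),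
      Finset.sum_congr rfl (g := fun _ => lam)
        (fun i hi => if_neg (by have := (Finset.mem_Ico.mp hi).1; omega))]
    simp only [Finset.sum_const, Nat.card_Ico, smul_eq_mul, nsmul_eq_mul, Nat.sub_zero]
    rw [Nat.cast_sub hℓm]
    ring
  have hg0 : g 0 = ((ℓ : ℤ) + lam * m : ℤ) := by
    simp only [hgdef, Fin.val_zero, mul_zero, pow_zero, mul_one]
    rw [← Int.cast_sum, hsum]
  -- g at nonzero k
  have hgk : ∀ k : Fin m, k ≠ 0 →
      g k = (ξ ^ ((k : ℕ) * ℓ) - 1) / (ξ ^ (k : ℕ) - 1) := by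
    intro k hk
    set z : ℂ := ξ ^ (k : ℕ) with hzdef
    have hz1 : z ≠ 1 := hξne k hk
    have hzm : z ^ m = 1 := by rw [hzdef, ← pow_mul, mul_comm, pow_mul, hξm, one_pow]
    have hstep : g k = ∑ i ∈ Finset.range m, (if i < ℓ then (lam : ℂ) + 1 else lam) * z ^ i := by
      rw [hgdef]
      rw [← Fin.sum_univ_eq_sum_range (fun i => (if i < ℓ then (lam : ℂ) + 1 else lam) * z ^ i) m]
      refine Finset.sum_congr rfl fun t _ => ?_
      rw [ha t]
      congr 1
      · split <;> push_cast <;> ring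
      · rw [hzdef, ← pow_mul, mul_comm]
    rw [hstep]
    have hsplit : ∀ i : ℕ, (if i < ℓ then (lam : ℂ) + 1 else lam) * z ^ i
        = lam * z ^ i + (if i < ℓ then (1 : ℂ) else 0) * z ^ i := by
      intro i; split <;> ring
    simp_rw [hsplit]
    rw [Finset.sum_add_distrib, ← Finset.mul_sum]
    rw [geom_sum_eq hz1 m, hzm, sub_self, zero_div, mul_zero, zero_add]
    have hind : ∑ i ∈ Finset.range m, (if i < ℓ then (1 : ℂ) else 0) * z ^ i
        = ∑ i ∈ Finset.range ℓ, z ^ i := by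
      rw [Finset.range_eq_Ico, ← Finset.sum_Ico_consecutive _ (Nat.zero_le ℓ) hℓm]
      have e1 : ∑ i ∈ Finset.Ico 0 ℓ, (if i < ℓ then (1 : ℂ) else 0) * z ^ i
          = ∑ i ∈ Finset.Ico 0 ℓ, z ^ i :=
        Finset.sum_congr rfl fun i hi => by
          rw [if_pos (Finset.mem_Ico.mp hi).2, one_mul]
      have e2 : ∑ i ∈ Finset.Ico ℓ m, (if i < ℓ then (1 : ℂ) else 0) * z ^ i = 0 :=
        Finset.sum_eq_zero fun i hi => by
          rw [if_neg (by have := (Finset.mem_Ico.mp hi).1; omega), zero_mul]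
      rw [e1, e2, add_zero, Finset.range_eq_Ico]
    rw [hind, geom_sum_eq hz1 ℓ, hzdef, ← pow_mul]
  -- the factors in the denominator are nonzero
  have hfac : ∀ k ∈ Finset.univ.erase (0 : Fin m), ξ ^ (k : ℕ) - 1 ≠ 0 := by
    intro k hk
    exact sub_ne_zero_of_ne (hξne k (Finset.ne_of_mem_erase hk))
  -- the numerator product equals the denominator product (mult. by ℓ is a bijection)
  letI : CommRing (Fin m) := Fin.instCommRing m
  obtain ⟨A, hA⟩ : ∃ A : Fin m, (ℓ : Fin m) * A = 1 := by
    refine ⟨((Nat.gcdA ℓ m : ℤ) : Fin m), ?_⟩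
    have hb := Nat.gcd_eq_gcd_ab ℓ m
    rw [h] at hb
    have h2 : (((ℓ : ℤ) * Nat.gcdA ℓ m + (m : ℤ) * Nat.gcdB ℓ m : ℤ) : Fin m)
        = ((1 : ℤ) : Fin m) := by rw [← hb]; norm_num
    push_cast at h2
    rwa [Fin.natCast_self, zero_mul, add_zero] at h2
  have hnum : ∏ k ∈ Finset.univ.erase (0 : Fin m), (ξ ^ ((k : ℕ) * ℓ) - 1)
      = ∏ k ∈ Finset.univ.erase (0 : Fin m), (ξ ^ (k : ℕ) - 1) := by
    have hval : ∀ k : Fin m, ξ ^ ((((ℓ : Fin m) * k) : Fin m) : ℕ) = ξ ^ ((k : ℕ) * ℓ) := by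
      intro k
      refine pow_congr_aux hξm ?_
      rw [Nat.mod_eq_of_lt (Fin.is_lt _), Fin.val_mul, Fin.val_natCast,
        Nat.mod_eq_of_lt hℓlt, Nat.mul_comm ℓ (k : ℕ)]
    refine Finset.prod_bij' (fun k _ => (ℓ : Fin m) * k) (fun k _ => A * k)
      ?_ ?_ ?_ ?_ ?_
    · intro k hk
      simp only [Finset.mem_erase, Finset.mem_univ, and_true] at hk ⊢
      intro h0
      apply hk
      calc k = A * ((ℓ : Fin m) * k) := by
              rw [← mul_assoc, mul_comm A ((ℓ : Fin m)), hA, one_mul]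
        _ = 0 := by rw [h0, mul_zero]
    · intro k hk
      simp only [Finset.mem_erase, Finset.mem_univ, and_true] at hk ⊢
      intro h0
      apply hk
      calc k = (ℓ : Fin m) * (A * k) := by rw [← mul_assoc, hA, one_mul]
        _ = 0 := by rw [h0, mul_zero]
    · intro k _
      show A * ((ℓ : Fin m) * k) = k
      rw [← mul_assoc, mul_comm A ((ℓ : Fin m)), hA, one_mul]
    · intro k _
      show (ℓ : Fin m) * (A * k) = k
      rw [← mul_assoc, hA, one_mul]
    · intro k _
      show _ = ξ ^ (((ℓ : Fin m) * k : Fin m) : ℕ) - 1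
      rw [hval]
  -- assemble
  have hprod : ∏ k ∈ Finset.univ.erase (0 : Fin m), g k = 1 := by
    rw [Finset.prod_congr rfl (fun k hk => hgk k (Finset.ne_of_mem_erase hk))]
    rw [Finset.prod_div_distrib, hnum]
    exact div_self (Finset.prod_ne_zero_iff.mpr hfac)
  have hfin : ∏ k : Fin m, g k = ((ℓ : ℤ) + lam * m : ℤ) := by
    rw [← Finset.mul_prod_erase Finset.univ g (Finset.mem_univ 0), hprod, mul_one, hg0]
  have hfin2 := hdet.trans hfin
  exact_mod_cast hfin2
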